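/- Let (e_i)_{i∈ι} be a basis of a vector space V over a field K, and let δ : V → V ⊗ V be the unique linear map with δ(e_i) = e_i ⊗ e_i for all i. Then a vector ψ ∈ V satisfies δ(ψ) = ψ ⊗ ψ if and only if ψ = 0 or ψ = e_i for some i ∈ ι; that is, the 'copyable' vectors of the copying map δ are exactly the zero vector and the basis vectors. -/

import Mathlib

open TensorProduct

/-- The 'copyable' vectors of the basis-copying map `δ : V → V ⊗ V`,
`δ(e_i) = e_i ⊗ e_i`, are exactly the zero vector and the basis vectors:
`δ ψ = ψ ⊗ ψ ↔ ψ = 0 ∨ ∃ i, ψ = e_i`. -/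
theorem copyable_iff_basis {K V ι : Type*} [Field K] [AddCommGroup V] [Module K V]
    (b : Module.Basis ι K V) (δ : V →ₗ[K] V ⊗[K] V)
    (hδ : ∀ i, δ (b i) = b i ⊗ₜ[K] b i) (ψ : V) :
    δ ψ = ψ ⊗ₜ[K] ψ ↔ ψ = 0 ∨ ∃ i, ψ = b i := by
  classical
  constructor
  · intro h
    set c := b.repr ψ with hc
    have hψ : ψ = c.sum fun k a => a • b k := by
      conv_lhs => rw [← Module.Basis.linearCombination_repr b ψ]
      rw [Finsupp.linearCombination_apply]
    have hδψ : δ ψ = c.sum fun k a => a • (b k ⊗ₜ[K] b k) := by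
      conv_lhs => rw [hψ]
      rw [map_finsuppSum]
      simp [hδ]
    have key : ∀ i j, c i * c j = if i = j then c i else 0 := by
      intro i j
      have h1 : ((b.tensorProduct b).repr (ψ ⊗ₜ[K] ψ)) (i, j) = c j * c i := by
        rw [Module.Basis.tensorProduct_repr_tmul_apply]; rfl
      have h2 : ((b.tensorProduct b).repr (δ ψ)) (i, j) = if i = j then c i else 0 := by
        rw [hδψ, map_finsuppSum, Finsupp.sum_apply, Finsupp.sum]
        simp only [map_smul, Finsupp.smul_apply, Module.Basis.tensorProduct_repr_tmul_apply,
          Module.Basis.repr_self, Finsupp.single_apply, smul_eq_mul, mul_ite, mul_one, mul_zero,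
          ite_mul, zero_mul, ← ite_and]
        by_cases hij : i = j
        · subst hij
          simp only [and_self]
          rw [Finset.sum_ite_eq' c.support i (fun k => c k)]
          by_cases hi : i ∈ c.support
          · simp [hi]
          · simp [hi, Finsupp.notMem_support_iff.mp hi]
        · rw [if_neg hij]
          apply Finset.sum_eq_zero
          intro k _
          rw [if_neg]
          rintro ⟨rfl, rfl⟩
          exact hij rfl
      rw [h, h1] at h2
      rw [mul_comm, h2]
    by_cases h0 : ψ = 0
    · exact Or.inl h0
    · right
      have hc0 : c ≠ 0 := fun hcz => h0 (by
        have := b.repr.injective (a₁ := ψ) (a₂ := 0) (by simp [← hc, hcz])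
        simpa using this)
      obtain ⟨i, hi⟩ := Finsupp.ne_iff.mp hc0
      simp only [Finsupp.coe_zero, Pi.zero_apply] at hi
      refine ⟨i, ?_⟩
      have hii := key i i
      rw [if_pos rfl] at hii
      have h1 : c i = 1 := by
        have h2 : c i * c i = c i * 1 := by rw [mul_one]; exact hii
        exact mul_left_cancel₀ hi h2
      have hcs : c = Finsupp.single i 1 := by
        ext j
        by_cases hji : j = i
        · subst hji; simp [h1]
        · have := key i j
          rw [if_neg (fun hh => hji hh.symm)] at this
          rw [h1, one_mul] at this
          rw [this, Finsupp.single_apply, if_neg (fun hh : i = j => hji hh.symm)]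
      apply b.repr.injective
      rw [← hc, hcs, Module.Basis.repr_self]
  · rintro (rfl | ⟨i, rfl⟩)
    · simp
    · simp [hδ]
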